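/- Let P = (A,B,R) and Q = (C,B,T) be relations. Then ONE has a winning strategy in the game G(P,Q) if and only if ONE has a winning strategy in the game G(P_{ℵ₀}, Q_{ℵ₀}), where P_{ℵ₀} and Q_{ℵ₀} are the ℵ₀-modifications of P and Q. -/
import Mathlib


open Set

/-- `GDom R` is the set of dominating families of the relation `R`:
sets `Z ⊆ B` such that every `a ∈ A` is dominated by some `b ∈ Z`. -/
def GDom {α β : Type*} (R : α → β → Prop) : Set (Set β) :=
  {Z | ∀ a : α, ∃ b ∈ Z, R a b}

/-- A relation is total: every element of the domain is dominated by something. -/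
def IsTotalRel {α β : Type*} (R : α → β → Prop) : Prop :=
  ∀ a : α, ∃ b : β, R a b

/-- The product of two relations. -/
def GProd {α β α' β' : Type*} (R : α → β → Prop) (R' : α' → β' → Prop) :
    α × α' → β × β' → Prop :=
  fun a b => R a.1 b.1 ∧ R' a.2 b.2

/-- The finite history consisting of the first `n` moves of the sequence `b`. -/
def GHist {β : Type*} (b : ℕ → β) (n : ℕ) : List β :=
  List.ofFn fun i : Fin n => b i

/-- ONE has a winning strategy in the game `G(P,Q)`: in inning `n` ONE plays `aₙ ∈ A`,
TWO answers `bₙ` with `R aₙ bₙ`; ONE wins iff `{bₙ : n} ∈ GDom T`. -/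
def OneWinsG {α β γ : Type*} (R : α → β → Prop) (T : γ → β → Prop) : Prop :=
  ∃ σ : List β → α, ∀ b : ℕ → β,
    (∀ n, R (σ (GHist b n)) (b n)) → Set.range b ∈ GDom T

/-- TWO has a winning strategy in the game `G(P,Q)`. -/
def TwoWinsG {α β γ : Type*} (R : α → β → Prop) (T : γ → β → Prop) : Prop :=
  ∃ τ : List α → β, ∀ a : ℕ → α,
    (∀ n, R (a n) (τ (GHist a (n + 1)))) ∧
    Set.range (fun n => τ (GHist a (n + 1))) ∉ GDom T

/-- ONE has a winning strategy in the game `G₁(𝒜,ℬ)`: in inning `n` ONE plays `Aₙ ∈ 𝒜`,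
TWO answers `bₙ ∈ Aₙ`; TWO wins iff `{bₙ : n} ∈ ℬ`. -/
def OneWinsG1 {β : Type*} (𝒜 ℬ : Set (Set β)) : Prop :=
  ∃ σ : List β → Set β, (∀ h, σ h ∈ 𝒜) ∧
    ∀ b : ℕ → β, (∀ n, b n ∈ σ (GHist b n)) → Set.range b ∉ ℬ

/-- TWO has a winning strategy in the game `G₁(𝒜,ℬ)`. -/
def TwoWinsG1 {β : Type*} (𝒜 ℬ : Set (Set β)) : Prop :=
  ∃ τ : List (Set β) → β, ∀ S : ℕ → Set β, (∀ n, S n ∈ 𝒜) →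
    (∀ n, τ (GHist S (n + 1)) ∈ S n) ∧
    Set.range (fun n => τ (GHist S (n + 1))) ∈ ℬ

/-- TWO has a winning strategy in the game `G_fin(𝒜,ℬ)`: in inning `n` ONE plays `Aₙ ∈ 𝒜`,
TWO answers a finite `Fₙ ⊆ Aₙ`; TWO wins iff `⋃ₙ Fₙ ∈ ℬ`. -/
def TwoWinsGfin {β : Type*} (𝒜 ℬ : Set (Set β)) : Prop :=
  ∃ τ : List (Set β) → Set β, ∀ S : ℕ → Set β, (∀ n, S n ∈ 𝒜) →
    (∀ n, τ (GHist S (n + 1)) ⊆ S n ∧ (τ (GHist S (n + 1))).Finite) ∧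
    (⋃ n, τ (GHist S (n + 1))) ∈ ℬ

/-- `(𝒜,ℬ)`-Lindelöf: every member of `𝒜` has a countable subset belonging to `ℬ`. -/
def LindelofFam {β : Type*} (𝒜 ℬ : Set (Set β)) : Prop :=
  ∀ S ∈ 𝒜, ∃ C ⊆ S, C.Countable ∧ C ∈ ℬ

/-- The selection principle `S₁(𝒜,ℬ)`. -/
def SelS1 {β : Type*} (𝒜 ℬ : Set (Set β)) : Prop :=
  ∀ A : ℕ → Set β, (∀ n, A n ∈ 𝒜) →
    ∃ b : ℕ → β, (∀ n, b n ∈ A n) ∧ Set.range b ∈ ℬ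

/-- The selection principle `S_fin(𝒜,ℬ)`. -/
def SelSfin {β : Type*} (𝒜 ℬ : Set (Set β)) : Prop :=
  ∀ A : ℕ → Set β, (∀ n, A n ∈ 𝒜) →
    ∃ F : ℕ → Set β, (∀ n, F n ⊆ A n ∧ (F n).Finite) ∧ (⋃ n, F n) ∈ ℬ

/-- `𝒪_X`: the family of open covers of `X`. -/
def OpenCovers (X : Type*) [TopologicalSpace X] : Set (Set (Set X)) :=
  {𝒰 | (∀ U ∈ 𝒰, IsOpen U) ∧ ⋃₀ 𝒰 = Set.univ}

/-- ONE has a winning strategy in the point-open game on `X`. -/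
def OneWinsPointOpen (X : Type*) [TopologicalSpace X] : Prop :=
  ∃ σ : List (Set X) → X, ∀ U : ℕ → Set X,
    (∀ n, IsOpen (U n) ∧ σ (GHist U n) ∈ U n) → Set.range U ∈ OpenCovers X

/-- TWO has a winning strategy in the point-open game on `X`. -/
def TwoWinsPointOpen (X : Type*) [TopologicalSpace X] : Prop :=
  ∃ τ : List X → Set X, ∀ x : ℕ → X,
    (∀ n, IsOpen (τ (GHist x (n + 1))) ∧ x n ∈ τ (GHist x (n + 1))) ∧
    Set.range (fun n => τ (GHist x (n + 1))) ∉ OpenCovers X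

/-- `𝔇_X`: the family of dense subsets of `X`. -/
def DenseSets (X : Type*) [TopologicalSpace X] : Set (Set X) :=
  {D | Dense D}

/-- ONE has a winning strategy in the point-picking game `G^D_ω(X)` of Berner and Juhász. -/
def OneWinsPointPicking (X : Type*) [TopologicalSpace X] : Prop :=
  ∃ σ : List X → Set X, (∀ h, IsOpen (σ h) ∧ (σ h).Nonempty) ∧
    ∀ x : ℕ → X, (∀ n, x n ∈ σ (GHist x n)) → Dense (Set.range x)

/-- TWO has a winning strategy in the point-picking game `G^D_ω(X)`. -/
def TwoWinsPointPicking (X : Type*) [TopologicalSpace X] : Prop :=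
  ∃ τ : List (Set X) → X, ∀ U : ℕ → Set X,
    (∀ n, IsOpen (U n) ∧ (U n).Nonempty) →
    (∀ n, τ (GHist U (n + 1)) ∈ U n) ∧
    ¬ Dense (Set.range fun n => τ (GHist U (n + 1)))

/-- `𝒟_X`: families of open sets whose union is dense in `X`. -/
def DenseUnionFams (X : Type*) [TopologicalSpace X] : Set (Set (Set X)) :=
  {𝒰 | (∀ U ∈ 𝒰, IsOpen U) ∧ Dense (⋃₀ 𝒰)}

/-- ONE has a winning strategy in Tkachuk's game `θ(X)`. -/
def OneWinsTheta (X : Type*) [TopologicalSpace X] : Prop :=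
  ∃ σ : List (Set X) → X, ∀ U : ℕ → Set X,
    (∀ n, IsOpen (U n) ∧ σ (GHist U n) ∈ U n) → Dense (⋃ n, U n)

/-- TWO has a winning strategy in Tkachuk's game `θ(X)`. -/
def TwoWinsTheta (X : Type*) [TopologicalSpace X] : Prop :=
  ∃ τ : List X → Set X, ∀ x : ℕ → X,
    (∀ n, IsOpen (τ (GHist x (n + 1))) ∧ x n ∈ τ (GHist x (n + 1))) ∧
    ¬ Dense (⋃ n, τ (GHist x (n + 1)))

/-- `Ω_x`: the family of subsets of `X` having `x` in their closure. -/
def OmegaPt {X : Type*} [TopologicalSpace X] (x : X) : Set (Set X) :=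
  {A | x ∈ closure A}

/-- ONE has a winning strategy in Gruenhage's game `G^c_{O,P}(X,x)`. -/
def OneWinsGruenhage {X : Type*} [TopologicalSpace X] (x : X) : Prop :=
  ∃ σ : List X → Set X, (∀ h, IsOpen (σ h) ∧ x ∈ σ h) ∧
    ∀ y : ℕ → X, (∀ n, y n ∈ σ (GHist y n)) → x ∈ closure (Set.range y)

/-- TWO has a winning strategy in Gruenhage's game `G^c_{O,P}(X,x)`. -/
def TwoWinsGruenhage {X : Type*} [TopologicalSpace X] (x : X) : Prop :=
  ∃ τ : List (Set X) → X, ∀ V : ℕ → Set X,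
    (∀ n, IsOpen (V n) ∧ x ∈ V n) →
    (∀ n, τ (GHist V (n + 1)) ∈ V n) ∧
    x ∉ closure (Set.range fun n => τ (GHist V (n + 1)))

/-- ONE has a winning strategy in the compact-open game on `X`. -/
def OneWinsCompactOpen (X : Type*) [TopologicalSpace X] : Prop :=
  ∃ σ : List (Set X) → Set X, (∀ h, IsCompact (σ h)) ∧
    ∀ U : ℕ → Set X, (∀ n, IsOpen (U n) ∧ σ (GHist U n) ⊆ U n) →
      (⋃ n, U n) = Set.univ

/-- `⪯` is downwards `P`-compatible. -/
def DownwardsCompat {α β : Type*} (R : α → β → Prop) (le : β → β → Prop) : Prop :=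
  ∀ a b₁ b₂, R a b₁ → R a b₂ → ∃ b, R a b ∧ le b b₁ ∧ le b b₂

/-- `⪯` is upwards `Q`-compatible. -/
def UpwardsCompat {γ β : Type*} (T : γ → β → Prop) (le : β → β → Prop) : Prop :=
  ∀ c b₁ b₂, T c b₁ → le b₁ b₂ → T c b₂

/-- `⪯` is countably downwards `P`-compatible. -/
def CountablyDownwardsCompat {α β : Type*} (R : α → β → Prop) (le : β → β → Prop) : Prop :=
  ∀ a, ∀ E : Set β, E.Countable → E.Nonempty → (∀ b ∈ E, R a b) →
    ∃ b', R a b' ∧ ∀ b ∈ E, le b' b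

/-- A relation is `ℵ₀`-preserving if some partial order on `B` is both upwards
compatible and countably downwards compatible with it. -/
def Aleph0Preserving {α β : Type*} (R : α → β → Prop) : Prop :=
  ∃ le : β → β → Prop, IsPartialOrder β le ∧
    UpwardsCompat R le ∧ CountablyDownwardsCompat R le

/-- `Dom_γ(T)`: the γ-dominating sequences of the relation `T`. -/
def GDomGamma {γ β : Type*} (T : γ → β → Prop) : Set (ℕ → β) :=
  {z | ∀ c : γ, {n : ℕ | ¬ T c (z n)}.Finite}

/-- ONE has a winning strategy in the game `G_γ(P,Q)`. -/
def OneWinsGgamma {α β γ : Type*} (R : α → β → Prop) (T : γ → β → Prop) : Prop :=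
  ∃ σ : List β → α, ∀ b : ℕ → β,
    (∀ n, R (σ (GHist b n)) (b n)) → b ∈ GDomGamma T

/-- TWO has a winning strategy in the game `G_γ(P,Q)`. -/
def TwoWinsGgamma {α β γ : Type*} (R : α → β → Prop) (T : γ → β → Prop) : Prop :=
  ∃ τ : List α → β, ∀ a : ℕ → α,
    (∀ n, R (a n) (τ (GHist a (n + 1)))) ∧
    (fun n => τ (GHist a (n + 1))) ∉ GDomGamma T

/-- ONE has a winning strategy in the game `G₁(𝒜, Dom_γ(T))`. -/
def OneWinsG1gamma {β γ : Type*} (𝒜 : Set (Set β)) (T : γ → β → Prop) : Prop :=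
  ∃ σ : List β → Set β, (∀ h, σ h ∈ 𝒜) ∧
    ∀ b : ℕ → β, (∀ n, b n ∈ σ (GHist b n)) → b ∉ GDomGamma T

/-- TWO has a winning strategy in the game `G₁(𝒜, Dom_γ(T))`. -/
def TwoWinsG1gamma {β γ : Type*} (𝒜 : Set (Set β)) (T : γ → β → Prop) : Prop :=
  ∃ τ : List (Set β) → β, ∀ S : ℕ → Set β, (∀ n, S n ∈ 𝒜) →
    (∀ n, τ (GHist S (n + 1)) ∈ S n) ∧
    (fun n => τ (GHist S (n + 1))) ∈ GDomGamma T

/-- The `ℵ₀`-modification of a relation: moves become nonempty countable subsets of `B`,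
dominated pointwise. -/
def CountMod {α β : Type*} (R : α → β → Prop) :
    α → {E : Set β // E.Countable ∧ E.Nonempty} → Prop :=
  fun a E => ∀ b ∈ E.1, R a b

section Stmt18Aux

variable {β : Type*}

/-- A canonical enumeration of a nonempty countable set. -/
noncomputable def cmEnum (E : {E : Set β // E.Countable ∧ E.Nonempty}) : ℕ → β :=
  (E.2.1.exists_eq_range E.2.2).choose

lemma cmEnum_range (E : {E : Set β // E.Countable ∧ E.Nonempty}) :
    E.1 = Set.range (cmEnum E) :=
  (E.2.1.exists_eq_range E.2.2).choose_spec

lemma cmEnum_mem (E : {E : Set β // E.Countable ∧ E.Nonempty}) (k : ℕ) :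
    cmEnum E k ∈ E.1 := by
  rw [cmEnum_range]; exact ⟨k, rfl⟩

lemma cmEnum_surj (E : {E : Set β // E.Countable ∧ E.Nonempty}) {b : β} (hb : b ∈ E.1) :
    ∃ k, cmEnum E k = b := by
  rw [cmEnum_range] at hb; exact hb

/-- The scheduled finite history (in the original game) that ONE uses at round `n`. -/
noncomputable def cmHist (E : ℕ → {E : Set β // E.Countable ∧ E.Nonempty}) : ℕ → List β
  | 0 => []
  | (n + 1) =>
      cmHist E (Nat.unpair n).1 ++ [cmEnum (E (Nat.unpair n).1) (Nat.unpair n).2]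
  decreasing_by exact Nat.lt_succ_of_le (Nat.unpair_left_le n)

lemma cmHist_pair (E : ℕ → {E : Set β // E.Countable ∧ E.Nonempty}) (m k : ℕ) :
    cmHist E (Nat.pair m k + 1) = cmHist E m ++ [cmEnum (E m) k] := by
  rw [cmHist]; simp

lemma cmHist_congr {E E' : ℕ → {E : Set β // E.Countable ∧ E.Nonempty}} (n : ℕ)
    (h : ∀ m < n, E m = E' m) : cmHist E n = cmHist E' n := by
  induction n using Nat.strong_induction_on with
  | _ n ih =>
    match n with
    | 0 => rw [cmHist, cmHist]
    | (n + 1) =>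
      have hm : (Nat.unpair n).1 < n + 1 := Nat.lt_succ_of_le (Nat.unpair_left_le n)
      rw [cmHist, cmHist, ih _ hm (fun m hmn => h m (hmn.trans hm)),
        h _ hm]

lemma GHist_succ {b : ℕ → β} (n : ℕ) : GHist b (n + 1) = GHist b n ++ [b n] := by
  simp only [GHist]
  rw [List.ofFn_succ']
  simp [List.concat_eq_append]

/-- Pad a finite list to an infinite sequence. -/
def padSeq {S : Type*} (d : S) (L : List S) : ℕ → S := fun i => L.getD i d

lemma padSeq_GHist {S : Type*} (d : S) (E : ℕ → S) (n : ℕ) :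
    ∀ m < n, padSeq d (GHist E n) m = E m := by
  intro m hm
  have hlen : (GHist E n).length = n := by simp [GHist]
  rw [padSeq, List.getD_eq_getElem _ _ (by omega)]
  simp [GHist]

end Stmt18Aux

/-- ONE has a winning strategy in `G(P,Q)` iff ONE has a winning strategy
in `G(P_{ℵ₀}, Q_{ℵ₀})`, the game on the `ℵ₀`-modifications. -/
theorem statement18 {α β γ : Type*} [Nonempty α] [Nonempty γ]
    (R : α → β → Prop) (T : γ → β → Prop)
    (hR : IsTotalRel R) (hT : IsTotalRel T) :
    OneWinsG R T ↔ OneWinsG (CountMod R) (CountMod T) := by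
  classical
  obtain ⟨a₀⟩ := ‹Nonempty α›
  obtain ⟨b₀, -⟩ := hR a₀
  set Sub := {E : Set β // E.Countable ∧ E.Nonempty} with hSub
  have dflt : Sub := ⟨{b₀}, Set.countable_singleton b₀, Set.singleton_nonempty b₀⟩
  constructor
  · rintro ⟨σ, hσ⟩
    refine ⟨fun L => σ (cmHist (padSeq dflt L) L.length), ?_⟩
    intro E hE c
    -- the strategy answers according to the scheduled history
    have hkey : ∀ n, σ (cmHist (padSeq dflt (GHist E n)) (GHist E n).length)
        = σ (cmHist E n) := by
      intro n
      have hlen : (GHist E n).length = n := by simp [GHist]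
      rw [hlen]
      congr 1
      exact cmHist_congr n (fun m hm => padSeq_GHist dflt E n m hm)
    by_contra hcon
    push_neg at hcon
    have bad : ∀ n, ∃ k, ¬ T c (cmEnum (E n) k) := by
      intro n
      have hn : ¬ CountMod T c (E n) := hcon (E n) ⟨n, rfl⟩
      rw [CountMod] at hn
      push_neg at hn
      obtain ⟨x, hxmem, hx⟩ := hn
      obtain ⟨k, hk⟩ := cmEnum_surj (E n) hxmem
      exact ⟨k, by rw [hk]; exact hx⟩
    -- build the diagonal play of the original game
    set r : ℕ → ℕ := fun j =>
      Nat.rec 0 (fun _ p => Nat.pair p (Classical.choose (bad p)) + 1) j with hr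
    set b : ℕ → β := fun j => cmEnum (E (r j)) (Classical.choose (bad (r j))) with hb
    have hrsucc : ∀ j, r (j + 1) = Nat.pair (r j) (Classical.choose (bad (r j))) + 1 :=
      fun j => rfl
    have hhist : ∀ j, GHist b j = cmHist E (r j) := by
      intro j
      induction j with
      | zero => show GHist b 0 = cmHist E 0; rw [cmHist]; rfl
      | succ j ih =>
        rw [GHist_succ, hrsucc, cmHist_pair, ih]
    have hplay : ∀ j, R (σ (GHist b j)) (b j) := by
      intro j
      have := hE (r j) (b j) (cmEnum_mem _ _)
      dsimp only at this
      rwa [hkey (r j), ← hhist] at this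
    obtain ⟨x, ⟨j, hjx⟩, hx⟩ := hσ b hplay c
    rw [← hjx] at hx
    exact Classical.choose_spec (bad (r j)) hx
  · rintro ⟨σ, hσ⟩
    set toS : β → Sub := fun x =>
      ⟨{x}, Set.countable_singleton x, Set.singleton_nonempty x⟩ with htoS
    refine ⟨fun L => σ (L.map toS), ?_⟩
    intro b hb c
    have hmap : ∀ n, (GHist b n).map toS = GHist (fun m => toS (b m)) n := by
      intro n; simp [GHist, List.map_ofFn]; rfl
    have hplay : ∀ n, CountMod R
        (σ (GHist (fun m => toS (b m)) n)) (toS (b n)) := by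
      intro n x hx
      have hxe : x = b n := by rw [htoS] at hx; exact hx
      subst hxe
      rw [← hmap]
      exact hb n
    obtain ⟨Ex, ⟨n, hnE⟩, hEx⟩ := hσ (fun m => toS (b m)) hplay c
    exact ⟨b n, ⟨n, rfl⟩, hEx (b n) (by rw [← hnE]; rw [htoS]; exact Set.mem_singleton _)⟩
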